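/- arXiv:1811.07781 — 2 statements merged into one kernel-verified Lean document; each statement's English description precedes it below -/
import Mathlib

section
/- Fix κ ≥ 0 and let A ∈ C²(ℝ, M²) be the solution of the initial value problem Ä + κA = Λ(A,Ȧ)·cof A with data (A₀,B₀) ∈ D such that X₂ := X₂(A₀,B₀) ≠ 0, and set X₁ := X₁(A₀,B₀) (necessarily X₁ > 0). Then for all t ∈ ℝ, ½|A(t)|² − 1 ≥ X₂²/(2X₁) > 0; in particular A(t) ∉ SO(2,ℝ) for all t ∈ ℝ. -/
open Matrix

noncomputable section

/-- `M²`: the space of 2×2 real matrices. -/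
abbrev M2 : Type := Matrix (Fin 2) (Fin 2) ℝ

/-- Frobenius inner product `⟨A,B⟩ = tr(AᵀB)`. -/
def mip (A B : M2) : ℝ := (Aᵀ * B).trace

/-- Frobenius norm `|A| = ⟨A,A⟩^{1/2}`. -/
def fnorm (A : M2) : ℝ := Real.sqrt (mip A A)

/-- The matrix Z = [[0,−1],[1,0]]. -/
def Zm : M2 := !![0, -1; 1, 0]

/-- The matrix K = [[1,0],[0,−1]]. -/
def Km : M2 := !![1, 0; 0, -1]

/-- The matrix M = [[0,1],[1,0]]. -/
def Mm : M2 := !![0, 1; 1, 0]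

/-- Cofactor: cof [[a,b],[c,d]] = [[d,−c],[−b,a]]. -/
def cofm (A : M2) : M2 := !![A 1 1, -(A 1 0); -(A 0 1), A 0 0]

/-- Membership in SO(2,ℝ). -/
def isSO (U : M2) : Prop := U.det = 1 ∧ U⁻¹ = Uᵀ

/-- The rotation U(θ) = cos θ·I + sin θ·Z. -/
def Um (θ : ℝ) : M2 := Real.cos θ • (1 : M2) + Real.sin θ • Zm

/-- Invariant X₁(A,B) = ½|B|² + (κ/2)|A|². -/
def X1 (κ : ℝ) (A B : M2) : ℝ := (1/2) * mip B B + (κ/2) * mip A A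

/-- Invariant X₂(A,B) = ½⟨ZA − AZ, B⟩. -/
def X2 (A B : M2) : ℝ := (1/2) * mip (Zm * A - A * Zm) B

/-- Invariant X₃(A,B) = ½⟨ZA + AZ, B⟩. -/
def X3 (A B : M2) : ℝ := (1/2) * mip (Zm * A + A * Zm) B

/-- Lagrange multiplier Λ(A,B) = 2(κ − det B)/|A|². -/
def Lam (κ : ℝ) (A B : M2) : ℝ := 2 * (κ - B.det) / (mip A A)

attribute [local instance] Matrix.normedAddCommGroup Matrix.normedSpace
def eCLM (i j : Fin 2) : M2 →L[ℝ] ℝ :=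
  LinearMap.toContinuousLinearMap
    { toFun := fun M => M i j, map_add' := fun _ _ => rfl, map_smul' := fun _ _ => rfl }

lemma hasDerivAt_entry {f : ℝ → M2} {t : ℝ} (hf : DifferentiableAt ℝ f t) (i j : Fin 2) :
    HasDerivAt (fun s => f s i j) (deriv f t i j) t := by
  have := (eCLM i j).hasFDerivAt.comp_hasDerivAt t hf.hasDerivAt
  exact this

lemma mip_eq (M N : M2) : mip M N =
    M 0 0 * N 0 0 + M 0 1 * N 0 1 + M 1 0 * N 1 0 + M 1 1 * N 1 1 := by
  simp [mip, Matrix.trace, Matrix.mul_apply, Fin.sum_univ_two]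
  ring

lemma X2_eq (M N : M2) : X2 M N =
    (1/2) * ((M 0 0 - M 1 1) * (N 0 1 + N 1 0) - (M 0 1 + M 1 0) * (N 0 0 - N 1 1)) := by
  rw [X2, mip_eq]
  simp [Zm, Matrix.mul_apply, Matrix.sub_apply, Fin.sum_univ_two, Matrix.vecMul,
    Matrix.vecHead, Matrix.vecTail, dotProduct]
  ring

lemma aux_const {f : ℝ → ℝ} {s : Set ℝ} (hc : Convex ℝ s) (ho : IsOpen s)
    (h : ∀ x ∈ s, HasDerivAt f 0 x) {x y : ℝ} (hx : x ∈ s) (hy : y ∈ s) : f x = f y := by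
  refine hc.is_const_of_fderivWithin_eq_zero
    (fun z hz => (h z hz).differentiableAt.differentiableWithinAt) (fun z hz => ?_) hx hy
  rw [fderivWithin_of_isOpen ho hz, (h z hz).hasFDerivAt.fderiv]
  ext v
  simp

set_option maxHeartbeats 1000000 in
/-- when X₂ ≠ 0, solutions are uniformly bounded away from SO(2,ℝ). -/
theorem bounded_away_from_so2 (κ : ℝ) (hκ : 0 ≤ κ) (A₀ B₀ : M2)
    (hdet : A₀.det = 1) (htan : mip B₀ (cofm A₀) = 0) (hX2 : X2 A₀ B₀ ≠ 0)
    (A : ℝ → M2) (hA : ContDiff ℝ 2 A)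
    (hA0 : A 0 = A₀) (hB0 : deriv A 0 = B₀)
    (hode : ∀ t : ℝ, deriv (deriv A) t + κ • A t
      = Lam κ (A t) (deriv A t) • cofm (A t)) :
    ∀ t : ℝ, X2 A₀ B₀ ^ 2 / (2 * X1 κ A₀ B₀) ≤ (1/2) * mip (A t) (A t) - 1 ∧
      0 < X2 A₀ B₀ ^ 2 / (2 * X1 κ A₀ B₀) ∧ ¬ isSO (A t) := by
  -- basic differentiability
  have hA1 : ContDiff ℝ 1 (deriv A) := by
    rw [show (2 : WithTop ℕ∞) = 1 + 1 from rfl, contDiff_succ_iff_deriv] at hA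
    exact hA.2.2
  have hAd : Differentiable ℝ A := by
    rw [show (2 : WithTop ℕ∞) = 1 + 1 from rfl, contDiff_succ_iff_deriv] at hA
    exact hA.1
  have hQd : Differentiable ℝ (deriv A) := hA1.differentiable one_ne_zero
  have hP : ∀ (s : ℝ) (i j : Fin 2), HasDerivAt (fun r => A r i j) (deriv A s i j) s :=
    fun s i j => hasDerivAt_entry (hAd s) i j
  have hQ : ∀ (s : ℝ) (i j : Fin 2),
      HasDerivAt (fun r => deriv A r i j) (deriv (deriv A) s i j) s :=
    fun s i j => hasDerivAt_entry (hQd s) i j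
  have hPc : ∀ i j, Continuous (fun s => A s i j) :=
    fun i j => Differentiable.continuous (fun s => (hP s i j).differentiableAt)
  have hQc : ∀ i j, Continuous (fun s => deriv A s i j) :=
    fun i j => Differentiable.continuous (fun s => (hQ s i j).differentiableAt)
  -- ODE entrywise
  have e00 : ∀ s : ℝ, deriv (deriv A) s 0 0
      = Lam κ (A s) (deriv A s) * A s 1 1 - κ * A s 0 0 := by
    intro s
    have h := congrFun (congrFun (hode s) 0) 0
    simp [cofm, Matrix.add_apply, Matrix.smul_apply, smul_eq_mul] at h
    linarith
  have e01 : ∀ s : ℝ, deriv (deriv A) s 0 1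
      = -(Lam κ (A s) (deriv A s) * A s 1 0) - κ * A s 0 1 := by
    intro s
    have h := congrFun (congrFun (hode s) 0) 1
    simp [cofm, Matrix.add_apply, Matrix.smul_apply, smul_eq_mul] at h
    linarith
  have e10 : ∀ s : ℝ, deriv (deriv A) s 1 0
      = -(Lam κ (A s) (deriv A s) * A s 0 1) - κ * A s 1 0 := by
    intro s
    have h := congrFun (congrFun (hode s) 1) 0
    simp [cofm, Matrix.add_apply, Matrix.smul_apply, smul_eq_mul] at h
    linarith
  have e11 : ∀ s : ℝ, deriv (deriv A) s 1 1
      = Lam κ (A s) (deriv A s) * A s 0 0 - κ * A s 1 1 := by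
    intro s
    have h := congrFun (congrFun (hode s) 1) 1
    simp [cofm, Matrix.add_apply, Matrix.smul_apply, smul_eq_mul] at h
    linarith
  -- scalar functions (as plain lambdas; u' = w)
  have hu : ∀ s : ℝ, HasDerivAt (fun r => A r 0 0 * A r 1 1 - A r 0 1 * A r 1 0)
      (deriv A s 0 0 * A s 1 1 + A s 0 0 * deriv A s 1 1
        - (deriv A s 0 1 * A s 1 0 + A s 0 1 * deriv A s 1 0)) s := fun s =>
    ((hP s 0 0).mul (hP s 1 1)).sub ((hP s 0 1).mul (hP s 1 0))
  -- w' = -2κ(u-1) where v ≠ 0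
  have hw : ∀ s : ℝ, (A s 0 0 * A s 0 0 + A s 0 1 * A s 0 1
        + A s 1 0 * A s 1 0 + A s 1 1 * A s 1 1) ≠ 0 →
      HasDerivAt (fun r => deriv A r 0 0 * A r 1 1 + A r 0 0 * deriv A r 1 1
        - (deriv A r 0 1 * A r 1 0 + A r 0 1 * deriv A r 1 0))
      (-(2*κ) * ((A s 0 0 * A s 1 1 - A s 0 1 * A s 1 0) - 1)) s := by
    intro s hv
    have hΛ : Lam κ (A s) (deriv A s) * (A s 0 0 * A s 0 0 + A s 0 1 * A s 0 1
          + A s 1 0 * A s 1 0 + A s 1 1 * A s 1 1)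
        = 2*κ - 2*(deriv A s 0 0 * deriv A s 1 1 - deriv A s 0 1 * deriv A s 1 0) := by
      rw [Lam, Matrix.det_fin_two, mip_eq]
      rw [div_mul_cancel₀ _ hv]
      ring
    have hd := (((hQ s 0 0).mul (hP s 1 1)).add ((hP s 0 0).mul (hQ s 1 1))).sub
        (((hQ s 0 1).mul (hP s 1 0)).add ((hP s 0 1).mul (hQ s 1 0)))
    refine hd.congr_deriv (Eq.symm ?_)
    have h00 := e00 s
    have h01 := e01 s
    have h10 := e10 s
    have h11 := e11 s
    linear_combination (-(A s 1 1)) * h00 - (A s 0 0) * h11 + (A s 1 0) * h01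
      + (A s 0 1) * h10 - hΛ
  -- the clopen set
  set C : Set ℝ := {s | A s 0 0 * A s 1 1 - A s 0 1 * A s 1 0 = 1 ∧
      deriv A s 0 0 * A s 1 1 + A s 0 0 * deriv A s 1 1
        - (deriv A s 0 1 * A s 1 0 + A s 0 1 * deriv A s 1 0) = 0} with hC_def
  have hC0 : (0 : ℝ) ∈ C := by
    constructor
    · show A 0 0 0 * A 0 1 1 - A 0 0 1 * A 0 1 0 = 1
      rw [hA0]
      rw [Matrix.det_fin_two] at hdet
      linarith
    · show deriv A 0 0 0 * A 0 1 1 + A 0 0 0 * deriv A 0 1 1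
        - (deriv A 0 0 1 * A 0 1 0 + A 0 0 1 * deriv A 0 1 0) = 0
      rw [hA0, hB0]
      rw [mip_eq] at htan
      simp [cofm] at htan
      linarith
  have hCopen : IsOpen C := by
    rw [Metric.isOpen_iff]
    rintro t₀ ⟨hu0, hw0⟩
    have hv2 : 2 ≤ A t₀ 0 0 * A t₀ 0 0 + A t₀ 0 1 * A t₀ 0 1
        + A t₀ 1 0 * A t₀ 1 0 + A t₀ 1 1 * A t₀ 1 1 := by
      nlinarith [sq_nonneg (A t₀ 0 0 - A t₀ 1 1), sq_nonneg (A t₀ 0 1 + A t₀ 1 0)]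
    have hvc : Continuous (fun s => A s 0 0 * A s 0 0 + A s 0 1 * A s 0 1
        + A s 1 0 * A s 1 0 + A s 1 1 * A s 1 1) :=
      ((((hPc 0 0).mul (hPc 0 0)).add ((hPc 0 1).mul (hPc 0 1))).add
        ((hPc 1 0).mul (hPc 1 0))).add ((hPc 1 1).mul (hPc 1 1))
    have hop : IsOpen {s : ℝ | 0 < A s 0 0 * A s 0 0 + A s 0 1 * A s 0 1
        + A s 1 0 * A s 1 0 + A s 1 1 * A s 1 1} := isOpen_lt continuous_const hvc
    obtain ⟨δ, hδ, hball⟩ := Metric.isOpen_iff.mp hop t₀ (by show (0:ℝ) < _; linarith)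
    refine ⟨δ, hδ, ?_⟩
    have hconv : Convex ℝ (Metric.ball t₀ δ) := convex_ball t₀ δ
    have hopen' : IsOpen (Metric.ball t₀ δ) := Metric.isOpen_ball
    -- energy
    have hE : ∀ r ∈ Metric.ball t₀ δ, HasDerivAt (fun s =>
        (deriv A s 0 0 * A s 1 1 + A s 0 0 * deriv A s 1 1
          - (deriv A s 0 1 * A s 1 0 + A s 0 1 * deriv A s 1 0)) ^ 2
        + (2*κ) * ((A s 0 0 * A s 1 1 - A s 0 1 * A s 1 0) - 1) ^ 2) 0 r := by
      intro r hr
      have hvr : (A r 0 0 * A r 0 0 + A r 0 1 * A r 0 1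
          + A r 1 0 * A r 1 0 + A r 1 1 * A r 1 1) ≠ 0 := ne_of_gt (hball hr)
      have hd := ((hw r hvr).pow 2).add ((((hu r).sub_const 1).pow 2).const_mul (2*κ))
      refine hd.congr_deriv (Eq.symm ?_)
      ring
    have hEball : ∀ s ∈ Metric.ball t₀ δ,
        (deriv A s 0 0 * A s 1 1 + A s 0 0 * deriv A s 1 1
          - (deriv A s 0 1 * A s 1 0 + A s 0 1 * deriv A s 1 0)) ^ 2
        + (2*κ) * ((A s 0 0 * A s 1 1 - A s 0 1 * A s 1 0) - 1) ^ 2 = 0 := by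
      intro s hs
      have h := aux_const hconv hopen' hE hs (Metric.mem_ball_self hδ)
      rw [h, hu0, hw0]
      ring
    have hwball : ∀ s ∈ Metric.ball t₀ δ,
        deriv A s 0 0 * A s 1 1 + A s 0 0 * deriv A s 1 1
          - (deriv A s 0 1 * A s 1 0 + A s 0 1 * deriv A s 1 0) = 0 := by
      intro s hs
      have h := hEball s hs
      have h1 : (0:ℝ) ≤ (2*κ) * ((A s 0 0 * A s 1 1 - A s 0 1 * A s 1 0) - 1)^2 := by positivity
      have h2 : (deriv A s 0 0 * A s 1 1 + A s 0 0 * deriv A s 1 1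
          - (deriv A s 0 1 * A s 1 0 + A s 0 1 * deriv A s 1 0)) ^ 2 = 0 := by
        nlinarith [sq_nonneg (deriv A s 0 0 * A s 1 1 + A s 0 0 * deriv A s 1 1
          - (deriv A s 0 1 * A s 1 0 + A s 0 1 * deriv A s 1 0))]
      exact pow_eq_zero_iff (by norm_num) |>.mp h2
    intro s hs
    refine ⟨?_, hwball s hs⟩
    have hu' : ∀ r ∈ Metric.ball t₀ δ,
        HasDerivAt (fun r => A r 0 0 * A r 1 1 - A r 0 1 * A r 1 0) 0 r := by
      intro r hr
      have := hu r
      rw [hwball r hr] at this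
      exact this
    have h := aux_const hconv hopen' hu' hs (Metric.mem_ball_self hδ)
    rw [h, hu0]
  have hCclosed : IsClosed C := by
    have huc : Continuous (fun s => A s 0 0 * A s 1 1 - A s 0 1 * A s 1 0) :=
      ((hPc 0 0).mul (hPc 1 1)).sub ((hPc 0 1).mul (hPc 1 0))
    have hwc : Continuous (fun s => deriv A s 0 0 * A s 1 1 + A s 0 0 * deriv A s 1 1
        - (deriv A s 0 1 * A s 1 0 + A s 0 1 * deriv A s 1 0)) :=
      (((hQc 0 0).mul (hPc 1 1)).add ((hPc 0 0).mul (hQc 1 1))).sub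
        (((hQc 0 1).mul (hPc 1 0)).add ((hPc 0 1).mul (hQc 1 0)))
    have : C = {s | A s 0 0 * A s 1 1 - A s 0 1 * A s 1 0 = 1} ∩
        {s | deriv A s 0 0 * A s 1 1 + A s 0 0 * deriv A s 1 1
          - (deriv A s 0 1 * A s 1 0 + A s 0 1 * deriv A s 1 0) = 0} := rfl
    rw [this]
    exact (isClosed_eq huc continuous_const).inter (isClosed_eq hwc continuous_const)
  have hCuniv : C = Set.univ := IsClopen.eq_univ ⟨hCclosed, hCopen⟩ ⟨0, hC0⟩
  have hmemC : ∀ s : ℝ, s ∈ C := fun s => hCuniv ▸ Set.mem_univ s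
  have hu1 : ∀ s : ℝ, A s 0 0 * A s 1 1 - A s 0 1 * A s 1 0 = 1 := fun s => (hmemC s).1
  have hw0 : ∀ s : ℝ, deriv A s 0 0 * A s 1 1 + A s 0 0 * deriv A s 1 1
      - (deriv A s 0 1 * A s 1 0 + A s 0 1 * deriv A s 1 0) = 0 := fun s => (hmemC s).2
  -- conservation of X1
  have hF1 : ∀ s : ℝ, HasDerivAt (fun r => X1 κ (A r) (deriv A r)) 0 s := by
    intro s
    have heq : (fun r => X1 κ (A r) (deriv A r)) = fun r =>
        (1/2) * (deriv A r 0 0 * deriv A r 0 0 + deriv A r 0 1 * deriv A r 0 1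
          + deriv A r 1 0 * deriv A r 1 0 + deriv A r 1 1 * deriv A r 1 1)
        + (κ/2) * (A r 0 0 * A r 0 0 + A r 0 1 * A r 0 1
          + A r 1 0 * A r 1 0 + A r 1 1 * A r 1 1) := by
      funext r
      rw [X1, mip_eq, mip_eq]
    rw [heq]
    have hd := HasDerivAt.add
      ((((((hQ s 0 0).mul (hQ s 0 0)).add ((hQ s 0 1).mul (hQ s 0 1))).add
          ((hQ s 1 0).mul (hQ s 1 0))).add ((hQ s 1 1).mul (hQ s 1 1))).const_mul (1/2))
      ((((((hP s 0 0).mul (hP s 0 0)).add ((hP s 0 1).mul (hP s 0 1))).add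
          ((hP s 1 0).mul (hP s 1 0))).add ((hP s 1 1).mul (hP s 1 1))).const_mul (κ/2))
    refine hd.congr_deriv (Eq.symm ?_)
    have h00 := e00 s
    have h01 := e01 s
    have h10 := e10 s
    have h11 := e11 s
    have hws := hw0 s
    linear_combination (-(deriv A s 0 0)) * h00 - (deriv A s 0 1) * h01
      - (deriv A s 1 0) * h10 - (deriv A s 1 1) * h11
      - Lam κ (A s) (deriv A s) * hws
  have hX1c : ∀ s : ℝ, X1 κ (A s) (deriv A s) = X1 κ A₀ B₀ := by
    intro s
    have h := is_const_of_deriv_eq_zero (𝕜 := ℝ)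
      (fun r => (hF1 r).differentiableAt) (fun r => (hF1 r).deriv) s 0
    rw [h, hA0, hB0]
  -- conservation of X2
  have hF2 : ∀ s : ℝ, HasDerivAt (fun r => X2 (A r) (deriv A r)) 0 s := by
    intro s
    have heq : (fun r => X2 (A r) (deriv A r)) = fun r =>
        (1/2) * ((A r 0 0 - A r 1 1) * (deriv A r 0 1 + deriv A r 1 0)
          - (A r 0 1 + A r 1 0) * (deriv A r 0 0 - deriv A r 1 1)) := by
      funext r
      rw [X2_eq]
    rw [heq]
    have hd := HasDerivAt.const_mul (1/2) <| HasDerivAt.sub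
      (((hP s 0 0).sub (hP s 1 1)).mul ((hQ s 0 1).add (hQ s 1 0)))
      (((hP s 0 1).add (hP s 1 0)).mul ((hQ s 0 0).sub (hQ s 1 1)))
    refine hd.congr_deriv (Eq.symm ?_)
    simp only [Pi.add_apply, Pi.sub_apply]
    have h00 := e00 s
    have h01 := e01 s
    have h10 := e10 s
    have h11 := e11 s
    linear_combination (-(1/2) * (A s 0 0 - A s 1 1)) * h01
      + (-(1/2) * (A s 0 0 - A s 1 1)) * h10
      + ((1/2) * (A s 0 1 + A s 1 0)) * h00
      + (-(1/2) * (A s 0 1 + A s 1 0)) * h11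
  have hX2c : ∀ s : ℝ, X2 (A s) (deriv A s) = X2 A₀ B₀ := by
    intro s
    have h := is_const_of_deriv_eq_zero (𝕜 := ℝ)
      (fun r => (hF2 r).differentiableAt) (fun r => (hF2 r).deriv) s 0
    rw [h, hA0, hB0]
  -- positivity of X1
  have hX1pos : 0 < X1 κ A₀ B₀ := by
    by_contra h
    push_neg at h
    apply hX2
    rw [X1, mip_eq, mip_eq] at h
    rw [X2_eq]
    have hA2 : 0 ≤ A₀ 0 0 * A₀ 0 0 + A₀ 0 1 * A₀ 0 1 + A₀ 1 0 * A₀ 1 0 + A₀ 1 1 * A₀ 1 1 := by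
      nlinarith [mul_self_nonneg (A₀ 0 0), mul_self_nonneg (A₀ 0 1),
        mul_self_nonneg (A₀ 1 0), mul_self_nonneg (A₀ 1 1)]
    have hk : 0 ≤ (κ/2) * (A₀ 0 0 * A₀ 0 0 + A₀ 0 1 * A₀ 0 1 + A₀ 1 0 * A₀ 1 0
        + A₀ 1 1 * A₀ 1 1) := mul_nonneg (by linarith) hA2
    have hsum : B₀ 0 0 * B₀ 0 0 + B₀ 0 1 * B₀ 0 1 + B₀ 1 0 * B₀ 1 0 + B₀ 1 1 * B₀ 1 1 ≤ 0 := by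
      linarith
    have hb00 : B₀ 0 0 = 0 := mul_self_eq_zero.mp (le_antisymm (by
      nlinarith [mul_self_nonneg (B₀ 0 1), mul_self_nonneg (B₀ 1 0),
        mul_self_nonneg (B₀ 1 1)]) (mul_self_nonneg _))
    have hb01 : B₀ 0 1 = 0 := mul_self_eq_zero.mp (le_antisymm (by
      nlinarith [mul_self_nonneg (B₀ 0 0), mul_self_nonneg (B₀ 1 0),
        mul_self_nonneg (B₀ 1 1)]) (mul_self_nonneg _))
    have hb10 : B₀ 1 0 = 0 := mul_self_eq_zero.mp (le_antisymm (by
      nlinarith [mul_self_nonneg (B₀ 0 0), mul_self_nonneg (B₀ 0 1),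
        mul_self_nonneg (B₀ 1 1)]) (mul_self_nonneg _))
    have hb11 : B₀ 1 1 = 0 := mul_self_eq_zero.mp (le_antisymm (by
      nlinarith [mul_self_nonneg (B₀ 0 0), mul_self_nonneg (B₀ 0 1),
        mul_self_nonneg (B₀ 1 0)]) (mul_self_nonneg _))
    rw [hb00, hb01, hb10, hb11]
    ring
  -- final conclusion
  intro t
  have hut := hu1 t
  have hx1 := hX1c t
  have hx2 := hX2c t
  rw [X1, mip_eq, mip_eq] at hx1
  rw [X2_eq] at hx2
  have hmain : X2 A₀ B₀ ^ 2 / (2 * X1 κ A₀ B₀) ≤ (1/2) * mip (A t) (A t) - 1 := by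
    rw [div_le_iff₀ (by linarith : (0:ℝ) < 2 * X1 κ A₀ B₀), mip_eq, ← hx2, ← hx1]
    have hv : A t 0 0 * A t 0 0 + A t 0 1 * A t 0 1 + A t 1 0 * A t 1 0 + A t 1 1 * A t 1 1
        = (A t 0 0 - A t 1 1)^2 + (A t 0 1 + A t 1 0)^2 + 2 := by linear_combination 2 * hut
    rw [hv]
    have k1 : (0:ℝ) ≤ ((A t 0 0 - A t 1 1) * (deriv A t 0 0 - deriv A t 1 1)
        + (A t 0 1 + A t 1 0) * (deriv A t 0 1 + deriv A t 1 0)) ^ 2 := sq_nonneg _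
    have k2 : (0:ℝ) ≤ ((A t 0 0 - A t 1 1)^2 + (A t 0 1 + A t 1 0)^2) *
        ((deriv A t 0 0 + deriv A t 1 1)^2 + (deriv A t 0 1 - deriv A t 1 0)^2) := by positivity
    have k3 : (0:ℝ) ≤ κ * (((A t 0 0 - A t 1 1)^2 + (A t 0 1 + A t 1 0)^2) *
        ((A t 0 0 - A t 1 1)^2 + (A t 0 1 + A t 1 0)^2 + 2)) := by positivity
    nlinarith [k1, k2, k3]
  have hpos : 0 < X2 A₀ B₀ ^ 2 / (2 * X1 κ A₀ B₀) :=
    div_pos (by positivity) (by linarith)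
  refine ⟨hmain, hpos, ?_⟩
  rintro ⟨h1, h2⟩
  have hinv : A t * (A t)ᵀ = 1 := by
    rw [← h2]
    exact Matrix.mul_nonsing_inv _ (by rw [h1]; exact isUnit_one)
  have ha : A t 0 0 * A t 0 0 + A t 0 1 * A t 0 1 = 1 := by
    have h := congrFun (congrFun hinv 0) 0
    simpa [Matrix.mul_apply, Fin.sum_univ_two, Matrix.one_apply] using h
  have hb : A t 1 0 * A t 1 0 + A t 1 1 * A t 1 1 = 1 := by
    have h := congrFun (congrFun hinv 1) 1
    simpa [Matrix.mul_apply, Fin.sum_univ_two, Matrix.one_apply] using h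
  rw [mip_eq] at hmain
  linarith
end
end

section
/- Fix κ ≥ 0 and let A ∈ C²(ℝ, M²) be a solution of the initial value problem Ä + κA = Λ(A,Ȧ)·cof A with data in D, such that t ↦ |A(t)| is nonconstant and T-periodic for some T > 0. Then for every positive integer N there exists ℓ ∈ {1,…,N²} (depending on N) such that |A(2ℓT + t) − A(t)| ≤ 8π|A(t)|/N for all t ∈ ℝ. -/
open Matrix

noncomputable section

attribute [local instance] Matrix.normedAddCommGroup Matrix.normedSpace


open Set in
lemma zero_of_deriv_bound_Icc {E : Type*} [NormedAddCommGroup E] [NormedSpace ℝ E]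
    {f f' : ℝ → E} {K a b : ℝ}
    (hd : ∀ t ∈ Set.Icc a b, HasDerivAt f (f' t) t)
    (hb : ∀ t ∈ Set.Icc a b, ‖f' t‖ ≤ K * ‖f t‖)
    (h0 : f a = 0) : ∀ t ∈ Set.Icc a b, f t = 0 := by
  intro t ht
  have H := norm_le_gronwallBound_of_norm_deriv_right_le
    (f := f) (f' := f') (δ := 0) (K := K) (ε := 0) (a := a) (b := b)
    (fun s hs => ((hd s hs).continuousAt.continuousWithinAt))
    (fun s hs => (hd s ⟨hs.1, hs.2.le⟩).hasDerivWithinAt)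
    (by simp [h0]) (fun s hs => by simpa using hb s ⟨hs.1, hs.2.le⟩)
  have h2 := H t ht
  rw [gronwallBound_ε0_δ0] at h2
  exact norm_le_zero_iff.1 h2

open Set in
lemma zero_of_deriv_bound_global {E : Type*} [NormedAddCommGroup E] [NormedSpace ℝ E]
    {f f' : ℝ → E} {t₀ : ℝ} {C : ℝ → ℝ}
    (hd : ∀ t, HasDerivAt f (f' t) t)
    (hC : Continuous C)
    (hb : ∀ t, ‖f' t‖ ≤ C t * ‖f t‖)
    (h0 : f t₀ = 0) : ∀ t, f t = 0 := by
  intro t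
  rcases le_total t₀ t with h | h
  · obtain ⟨K, hK⟩ := (isCompact_Icc (a := t₀) (b := t)).exists_bound_of_continuousOn
      hC.continuousOn
    refine zero_of_deriv_bound_Icc (K := K) (fun s _ => hd s) (fun s hs => ?_) h0 t ⟨h, le_refl t⟩
    exact (hb s).trans (mul_le_mul_of_nonneg_right ((le_abs_self _).trans (by simpa using hK s hs))
      (norm_nonneg _))
  · set g : ℝ → E := fun s => f (2 * t₀ - s) with hg
    have hdg : ∀ s, HasDerivAt g (-f' (2 * t₀ - s)) s := by
      intro s
      have h1 : HasDerivAt (fun s : ℝ => 2 * t₀ - s) (-1) s := by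
        simpa using (hasDerivAt_id s).const_sub (2 * t₀)
      have := (hd (2 * t₀ - s)).scomp s h1
      simp at this; exact this
    obtain ⟨K, hK⟩ := (isCompact_Icc (a := t₀) (b := 2 * t₀ - t)).exists_bound_of_continuousOn
      ((hC.comp (by continuity : Continuous fun s : ℝ => 2 * t₀ - s)).continuousOn)
    have hz : ∀ s ∈ Set.Icc t₀ (2 * t₀ - t), g s = 0 := by
      refine zero_of_deriv_bound_Icc (K := K) (fun s _ => hdg s) (fun s hs => ?_)
        (by simp [hg, h0, two_mul])
      have := hb (2 * t₀ - s)
      calc ‖-f' (2 * t₀ - s)‖ = ‖f' (2 * t₀ - s)‖ := by rw [norm_neg]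
        _ ≤ C (2 * t₀ - s) * ‖g s‖ := this
        _ ≤ K * ‖g s‖ := by
            refine mul_le_mul_of_nonneg_right ?_ (norm_nonneg _)
            exact (le_abs_self _).trans (by simpa using hK s hs)
    have := hz (2 * t₀ - t) ⟨by linarith, by linarith⟩
    simpa [hg] using this

lemma norm_prod4 (a b c d : ℝ) : ‖((a, b, c, d) : ℝ × ℝ × ℝ × ℝ)‖ = |a| ⊔ (|b| ⊔ (|c| ⊔ |d|)) := by
  simp [Prod.norm_def, Real.norm_eq_abs]

lemma rot_lemma {x y x' y' μ : ℝ → ℝ} {T : ℝ}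
    (hx : ∀ t, HasDerivAt x (x' t) t) (hy : ∀ t, HasDerivAt y (y' t) t)
    (hx' : ∀ t, HasDerivAt x' (μ t * x t) t) (hy' : ∀ t, HasDerivAt y' (μ t * y t) t)
    (hμ : Continuous μ) (hμT : ∀ t, μ (t + T) = μ t)
    (hρ : ∀ t, x (t + T) ^ 2 + y (t + T) ^ 2 = x t ^ 2 + y t ^ 2) :
    ∃ c s : ℝ, c ^ 2 + s ^ 2 = 1 ∧
      ∀ t, x (t + T) = c * x t - s * y t ∧ y (t + T) = s * x t + c * y t := by
  by_cases hzero : ∀ t, x t = 0 ∧ y t = 0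
  · exact ⟨1, 0, by norm_num, fun t => by
      simp [(hzero (t + T)).1, (hzero (t + T)).2, (hzero t).1, (hzero t).2]⟩
  push_neg at hzero
  obtain ⟨t₀, ht₀⟩ := hzero
  have hρpos : 0 < x t₀ ^ 2 + y t₀ ^ 2 := by
    rcases eq_or_ne (x t₀) 0 with h | h
    · have h2 := ht₀ h; positivity
    · positivity
  have hρne : x t₀ ^ 2 + y t₀ ^ 2 ≠ 0 := hρpos.ne'
  have shift : ∀ (f f' : ℝ → ℝ), (∀ t, HasDerivAt f (f' t) t) →
      ∀ t, HasDerivAt (fun s => f (s + T)) (f' (t + T)) t := by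
    intro f f' hf t
    have := (hf (t + T)).comp t ((hasDerivAt_id t).add_const T)
    simp [Function.comp] at this; exact this
  have hL : ∀ t u, x t * y' t - x' t * y t = x u * y' u - x' u * y u := by
    have hdiff : ∀ t, HasDerivAt (fun t => x t * y' t - x' t * y t) 0 t := by
      intro t
      have h := ((hx t).mul (hy' t)).sub ((hx' t).mul (hy t))
      refine h.congr_deriv ?_; ring
    exact fun t u => is_const_of_deriv_eq_zero
      (fun t => (hdiff t).differentiableAt) (fun t => (hdiff t).deriv) t u
  have hNd : ∀ t, HasDerivAt (fun t => x t ^ 2 + y t ^ 2)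
      (2 * (x t * x' t + y t * y' t)) t := by
    intro t
    have h := ((hx t).mul (hx t)).add ((hy t).mul (hy t))
    have h2 : HasDerivAt (fun t => x t * x t + y t * y t)
        (2 * (x t * x' t + y t * y' t)) t := by refine h.congr_deriv ?_; ring
    have h3 : (fun t => x t ^ 2 + y t ^ 2) = fun t => x t * x t + y t * y t := by
      funext u; ring
    rw [h3]; exact h2
  have hNper : ∀ t, x (t + T) * x' (t + T) + y (t + T) * y' (t + T)
      = x t * x' t + y t * y' t := by
    intro t
    have h1 : HasDerivAt (fun s => x (s + T) ^ 2 + y (s + T) ^ 2)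
        (2 * (x (t + T) * x' (t + T) + y (t + T) * y' (t + T))) t :=
      shift _ _ hNd t
    have h2 : (fun s => x (s + T) ^ 2 + y (s + T) ^ 2) = fun s => x s ^ 2 + y s ^ 2 :=
      funext hρ
    rw [h2] at h1
    have := h1.unique (hNd t)
    linarith
  set c : ℝ := (x t₀ * x (t₀ + T) + y t₀ * y (t₀ + T)) / (x t₀ ^ 2 + y t₀ ^ 2) with hc
  set s : ℝ := (x t₀ * y (t₀ + T) - y t₀ * x (t₀ + T)) / (x t₀ ^ 2 + y t₀ ^ 2) with hs
  have hnorm : x (t₀ + T) ^ 2 + y (t₀ + T) ^ 2 = x t₀ ^ 2 + y t₀ ^ 2 := hρ t₀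
  have hcs : c ^ 2 + s ^ 2 = 1 := by
    rw [hc, hs]
    field_simp
    linear_combination (x t₀ ^ 2 + y t₀ ^ 2) * hnorm
  have hxT : x (t₀ + T) = c * x t₀ - s * y t₀ := by
    rw [hc, hs]
    field_simp
    linear_combination x t₀ ^ 2 * hnorm - hnorm * x t₀ ^ 2
  have hyT : y (t₀ + T) = s * x t₀ + c * y t₀ := by
    rw [hc, hs]
    field_simp
    ring
  have hN0 : x (t₀ + T) * x' (t₀ + T) + y (t₀ + T) * y' (t₀ + T)
      = x t₀ * x' t₀ + y t₀ * y' t₀ := hNper t₀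
  have hL0 : x (t₀ + T) * y' (t₀ + T) - x' (t₀ + T) * y (t₀ + T)
      = x t₀ * y' t₀ - x' t₀ * y t₀ := hL (t₀ + T) t₀
  rw [hxT, hyT] at hN0 hL0
  have hx'T : x' (t₀ + T) = c * x' t₀ - s * y' t₀ := by
    have hu : (x t₀ ^ 2 + y t₀ ^ 2) * (x' (t₀ + T) - (c * x' t₀ - s * y' t₀)) = 0 := by
      linear_combination (c * x t₀ - s * y t₀) * hN0 - (s * x t₀ + c * y t₀) * hL0
        - (x t₀ ^ 2 + y t₀ ^ 2) * x' (t₀ + T) * hcs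
    rcases mul_eq_zero.1 hu with h | h
    · exact absurd h hρne
    · linarith
  have hy'T : y' (t₀ + T) = s * x' t₀ + c * y' t₀ := by
    have hu : (x t₀ ^ 2 + y t₀ ^ 2) * (y' (t₀ + T) - (s * x' t₀ + c * y' t₀)) = 0 := by
      linear_combination (s * x t₀ + c * y t₀) * hN0 + (c * x t₀ - s * y t₀) * hL0
        - (x t₀ ^ 2 + y t₀ ^ 2) * y' (t₀ + T) * hcs
    rcases mul_eq_zero.1 hu with h | h
    · exact absurd h hρne
    · linarith
  refine ⟨c, s, hcs, ?_⟩
  set F : ℝ → ℝ × ℝ × ℝ × ℝ := fun t =>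
    (x (t + T) - (c * x t - s * y t), y (t + T) - (s * x t + c * y t),
     x' (t + T) - (c * x' t - s * y' t), y' (t + T) - (s * x' t + c * y' t)) with hF
  set F' : ℝ → ℝ × ℝ × ℝ × ℝ := fun t =>
    (x' (t + T) - (c * x' t - s * y' t), y' (t + T) - (s * x' t + c * y' t),
     μ t * (x (t + T) - (c * x t - s * y t)), μ t * (y (t + T) - (s * x t + c * y t))) with hF'
  have hdF : ∀ t, HasDerivAt F (F' t) t := by
    intro t
    have h1 : HasDerivAt (fun t => x (t + T) - (c * x t - s * y t))
        (x' (t + T) - (c * x' t - s * y' t)) t :=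
      (shift x x' hx t).sub (((hx t).const_mul c).sub ((hy t).const_mul s))
    have h2 : HasDerivAt (fun t => y (t + T) - (s * x t + c * y t))
        (y' (t + T) - (s * x' t + c * y' t)) t :=
      (shift y y' hy t).sub (((hx t).const_mul s).add ((hy t).const_mul c))
    have h3 : HasDerivAt (fun t => x' (t + T) - (c * x' t - s * y' t))
        (μ t * (x (t + T) - (c * x t - s * y t))) t := by
      have := (shift x' (fun u => μ u * x u) hx' t).sub
        (((hx' t).const_mul c).sub ((hy' t).const_mul s))
      rw [hμT t] at this
      refine this.congr_deriv ?_; ring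
    have h4 : HasDerivAt (fun t => y' (t + T) - (s * x' t + c * y' t))
        (μ t * (y (t + T) - (s * x t + c * y t))) t := by
      have := (shift y' (fun u => μ u * y u) hy' t).sub
        (((hx' t).const_mul s).add ((hy' t).const_mul c))
      rw [hμT t] at this
      refine this.congr_deriv ?_; ring
    exact (h1.prodMk (h2.prodMk (h3.prodMk h4)))
  have hbound : ∀ t, ‖F' t‖ ≤ (1 ⊔ |μ t|) * ‖F t‖ := by
    intro t
    rw [hF, hF', norm_prod4, norm_prod4]
    have hR : (0:ℝ) ≤ |x (t + T) - (c * x t - s * y t)| ⊔ (|y (t + T) - (s * x t + c * y t)| ⊔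
        (|x' (t + T) - (c * x' t - s * y' t)| ⊔ |y' (t + T) - (s * x' t + c * y' t)|)) := by
      positivity
    have hC1 : (1:ℝ) ≤ 1 ⊔ |μ t| := le_max_left _ _
    have hCμ : |μ t| ≤ 1 ⊔ |μ t| := le_max_right _ _
    refine max_le ?_ (max_le ?_ (max_le ?_ ?_)) <;>
      [skip; skip; rw [abs_mul]; rw [abs_mul]]
    · calc |x' (t + T) - (c * x' t - s * y' t)| ≤ _ := by
            exact le_max_of_le_right (le_max_of_le_right (le_max_left _ _))
        _ ≤ (1 ⊔ |μ t|) * _ := le_mul_of_one_le_left hR hC1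
    · calc |y' (t + T) - (s * x' t + c * y' t)| ≤ _ := by
            exact le_max_of_le_right (le_max_of_le_right (le_max_right _ _))
        _ ≤ (1 ⊔ |μ t|) * _ := le_mul_of_one_le_left hR hC1
    · exact mul_le_mul hCμ (le_max_left _ _) (abs_nonneg _) (le_trans zero_le_one hC1)
    · exact mul_le_mul hCμ (le_max_of_le_right (le_max_left _ _)) (abs_nonneg _)
        (le_trans zero_le_one hC1)
  have hF0 : F t₀ = 0 := by
    rw [hF]
    simp only [Prod.mk_eq_zero]
    exact ⟨by rw [hxT]; ring, by rw [hyT]; ring, by rw [hx'T]; ring, by rw [hy'T]; ring⟩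
  have hzero := zero_of_deriv_bound_global hdF
    (continuous_const.max hμ.abs) hbound hF0
  intro t
  have ht := hzero t
  rw [hF] at ht
  simp only [Prod.mk_eq_zero] at ht
  exact ⟨by linarith [ht.1], by linarith [ht.2.1]⟩

lemma abs_sin_le_abs (x : ℝ) : |Real.sin x| ≤ |x| := by
  have key : ∀ y : ℝ, 0 ≤ y → |Real.sin y| ≤ y := by
    intro y hy
    rcases le_total y 1 with h1 | h1
    · rw [abs_of_nonneg (Real.sin_nonneg_of_nonneg_of_le_pi hy
        (h1.trans (by linarith [Real.pi_gt_three])))]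
      exact Real.sin_le hy
    · exact (Real.abs_sin_le_one y).trans h1
  rcases le_total 0 x with h | h
  · rw [abs_of_nonneg h]; exact key x h
  · rw [abs_of_nonpos h]
    have : |Real.sin x| = |Real.sin (-x)| := by rw [Real.sin_neg, abs_neg]
    rw [this]; exact key (-x) (by linarith)

lemma exists_cos_sin (c s : ℝ) (h : c ^ 2 + s ^ 2 = 1) :
    ∃ φ : ℝ, Real.cos φ = c ∧ Real.sin φ = s := by
  have hc1 : -1 ≤ c := by nlinarith [sq_nonneg s]
  have hc2 : c ≤ 1 := by nlinarith [sq_nonneg s]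
  have hs2 : s ^ 2 = 1 - c ^ 2 := by linarith
  rcases le_total 0 s with hs | hs
  · refine ⟨Real.arccos c, Real.cos_arccos hc1 hc2, ?_⟩
    rw [Real.sin_arccos, ← hs2, Real.sqrt_sq hs]
  · refine ⟨-Real.arccos c, by rw [Real.cos_neg, Real.cos_arccos hc1 hc2], ?_⟩
    rw [Real.sin_neg, Real.sin_arccos, ← hs2, Real.sqrt_sq_eq_abs, abs_of_nonpos hs, neg_neg]

lemma rot_iter {x y : ℝ → ℝ} {T φ : ℝ}
    (h : ∀ t, x (t + T) = Real.cos φ * x t - Real.sin φ * y t ∧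
      y (t + T) = Real.sin φ * x t + Real.cos φ * y t) :
    ∀ (k : ℕ) (t : ℝ), x (t + k * T) = Real.cos (k * φ) * x t - Real.sin (k * φ) * y t ∧
      y (t + k * T) = Real.sin (k * φ) * x t + Real.cos (k * φ) * y t := by
  intro k
  induction k with
  | zero => intro t; simp
  | succ n ih =>
    intro t
    have e : t + (n + 1 : ℕ) * T = (t + T) + n * T := by push_cast; ring
    have hn := ih (t + T)
    have h1 := h t
    constructor
    · rw [e, hn.1, h1.1, h1.2]
      have : ((n + 1 : ℕ) : ℝ) * φ = n * φ + φ := by push_cast; ring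
      rw [this, Real.cos_add, Real.sin_add]; ring
    · rw [e, hn.2, h1.1, h1.2]
      have : ((n + 1 : ℕ) : ℝ) * φ = n * φ + φ := by push_cast; ring
      rw [this, Real.cos_add, Real.sin_add]; ring

lemma dirichlet2 (α β : ℝ) (N : ℕ) (hN : 0 < N) :
    ∃ ℓ : ℕ, 1 ≤ ℓ ∧ ℓ ≤ N ^ 2 ∧ ∃ m₁ m₂ : ℤ,
      |ℓ * α - m₁| ≤ 1 / N ∧ |ℓ * β - m₂| ≤ 1 / N := by
  have hNR : (0:ℝ) < N := by exact_mod_cast hN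
  have hfr : ∀ γ : ℝ, ⌊(N : ℝ) * Int.fract γ⌋₊ < N := by
    intro γ
    have h1 : (N : ℝ) * Int.fract γ < N := by
      nth_rewrite 2 [show (N:ℝ) = N * 1 by ring]
      exact mul_lt_mul_of_pos_left (Int.fract_lt_one γ) hNR
    exact Nat.floor_lt (mul_nonneg hNR.le (Int.fract_nonneg _)) |>.2 h1
  set f : Fin (N ^ 2 + 1) → Fin N × Fin N := fun k =>
    (⟨⌊(N : ℝ) * Int.fract (k.1 * α)⌋₊, hfr _⟩, ⟨⌊(N : ℝ) * Int.fract (k.1 * β)⌋₊, hfr _⟩) with hf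
  have hcard : Fintype.card (Fin N × Fin N) < Fintype.card (Fin (N ^ 2 + 1)) := by
    simp [Fintype.card_prod, pow_two]
  obtain ⟨j, k, hjk, hfeq⟩ := Fintype.exists_ne_map_eq_of_card_lt f hcard
  wlog hlt : (j : ℕ) < (k : ℕ) generalizing j k
  · exact this k j hjk.symm hfeq.symm (by omega)
  have key : ∀ γ : ℝ, ⌊(N : ℝ) * Int.fract (j.1 * γ)⌋₊ = ⌊(N : ℝ) * Int.fract (k.1 * γ)⌋₊ →
      ∃ m : ℤ, |(k.1 - j.1 : ℕ) * γ - m| ≤ 1 / N := by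
    intro γ hfl
    refine ⟨⌊(k.1 : ℝ) * γ⌋ - ⌊(j.1 : ℝ) * γ⌋, ?_⟩
    have e : ((k.1 - j.1 : ℕ) : ℝ) * γ - ((⌊(k.1 : ℝ) * γ⌋ - ⌊(j.1 : ℝ) * γ⌋ : ℤ) : ℝ)
        = Int.fract (k.1 * γ) - Int.fract (j.1 * γ) := by
      rw [Int.fract, Int.fract]
      push_cast [Nat.cast_sub hlt.le]
      ring
    rw [e]
    set u := Int.fract (j.1 * γ) with hu
    set v := Int.fract (k.1 * γ) with hv
    have h1 : (⌊(N : ℝ) * u⌋₊ : ℝ) ≤ N * u := Nat.floor_le (mul_nonneg hNR.le (Int.fract_nonneg _))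
    have h2 : (N : ℝ) * u < ⌊(N : ℝ) * u⌋₊ + 1 := Nat.lt_floor_add_one _
    have h3 : (⌊(N : ℝ) * v⌋₊ : ℝ) ≤ N * v := Nat.floor_le (mul_nonneg hNR.le (Int.fract_nonneg _))
    have h4 : (N : ℝ) * v < ⌊(N : ℝ) * v⌋₊ + 1 := Nat.lt_floor_add_one _
    rw [hfl] at h1 h2
    rw [abs_le]
    constructor
    · rw [show -(1/(N:ℝ)) = (-1)/N by ring, div_le_iff₀ hNR]
      have e2 : (v - u) * N = N * v - N * u := by ring
      rw [e2]
      linarith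
    · rw [le_div_iff₀ hNR]
      have e2 : (v - u) * N = N * v - N * u := by ring
      rw [e2]
      linarith
  obtain ⟨m₁, hm₁⟩ := key α (congrArg (fun p => (p.1 : Fin N).1) hfeq)
  obtain ⟨m₂, hm₂⟩ := key β (congrArg (fun p => (p.2 : Fin N).1) hfeq)
  exact ⟨k.1 - j.1, by omega, by omega, m₁, m₂, hm₁, hm₂⟩

open Set in
lemma det_one_fwd {κ : ℝ} {f f1 g : ℝ → ℝ}
    (hf : ∀ t, HasDerivAt f (f1 t) t)
    (hf1 : ∀ t, g t ≠ 0 → HasDerivAt f1 (-(2 * κ) * (f t - 1)) t)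
    (hg : Continuous g)
    (hgf : ∀ t, f t = 1 → 2 ≤ g t)
    (hf0 : f 0 = 1) (hf10 : f1 0 = 0) :
    ∀ t, 0 ≤ t → f t = 1 := by
  intro b hb
  have claimA : ∀ b' : ℝ, 0 ≤ b' → (∀ s ∈ Icc (0:ℝ) b', 1 < g s) →
      ∀ s ∈ Icc (0:ℝ) b', f s = 1 := by
    intro b' _ hgpos s hs
    set F : ℝ → ℝ × ℝ := fun t => (f t - 1, f1 t) with hF
    set F' : ℝ → ℝ × ℝ := fun t => (f1 t, -(2 * κ) * (f t - 1)) with hF'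
    have hzero : ∀ u ∈ Icc (0:ℝ) b', F u = 0 := by
      refine zero_of_deriv_bound_Icc (f' := F') (K := 1 ⊔ (2 * |κ|)) (fun u hu => ?_)
        (fun u hu => ?_) (by simp [hF, hf0, hf10])
      · exact ((hf u).sub_const 1).prodMk (hf1 u (by have := hgpos u hu; linarith))
      · rw [hF, hF', Prod.norm_def, Prod.norm_def]
        simp only [Real.norm_eq_abs]
        have h1 : |f1 u| ≤ (1 ⊔ (2 * |κ|)) * (|f u - 1| ⊔ |f1 u|) := by
          calc |f1 u| ≤ |f u - 1| ⊔ |f1 u| := le_max_right _ _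
            _ ≤ _ := le_mul_of_one_le_left (by positivity) (le_max_left _ _)
        have h2 : |(-(2 * κ) * (f u - 1))| ≤ (1 ⊔ (2 * |κ|)) * (|f u - 1| ⊔ |f1 u|) := by
          rw [abs_mul, abs_neg, abs_mul, abs_two]
          exact mul_le_mul (le_max_right _ _) (le_max_left _ _) (abs_nonneg _)
            (le_trans zero_le_one (le_max_left _ _))
        exact max_le h1 h2
    have := hzero s hs
    rw [hF] at this
    simp only [Prod.mk_eq_zero] at this
    linarith [this.1]
  have hgood : ∀ s ∈ Icc (0:ℝ) b, 1 < g s := by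
    by_contra hbad
    push_neg at hbad
    set W : Set ℝ := {t | t ∈ Icc (0:ℝ) b ∧ g t ≤ 1} with hWdef
    have hWne : W.Nonempty := by
      obtain ⟨w, hw1, hw2⟩ := hbad
      exact ⟨w, hw1, hw2⟩
    have hWclosed : IsClosed W := by
      have : W = Icc (0:ℝ) b ∩ g ⁻¹' Iic 1 := by
        ext u; simp [hWdef, and_assoc]
      rw [this]
      exact isClosed_Icc.inter (isClosed_Iic.preimage hg)
    have hWbdd : BddBelow W := ⟨0, fun u hu => hu.1.1⟩
    set τ := sInf W with hτ
    have hτW : τ ∈ W := hWclosed.csInf_mem hWne hWbdd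
    have hτ0 : 0 < τ := by
      rcases (hτW.1.1).lt_or_eq with h | h
      · exact h
      · exfalso
        have h2 : 2 ≤ g 0 := hgf 0 hf0
        have h3 : g τ ≤ 1 := hτW.2
        rw [h] at h2
        linarith
    have hpre : ∀ x, 0 ≤ x → x < τ → 1 < g x := by
      intro x hx0 hxτ
      by_contra hgx
      push_neg at hgx
      have hxW : x ∈ W := ⟨⟨hx0, hxτ.le.trans hτW.1.2⟩, hgx⟩
      have := csInf_le hWbdd hxW
      rw [← hτ] at this
      linarith
    have hf2 : ∀ x, 0 ≤ x → x < τ → 2 ≤ g x := by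
      intro x hx0 hxτ
      refine hgf x ?_
      exact claimA x hx0 (fun u hu => hpre u hu.1 (lt_of_le_of_lt hu.2 hxτ)) x ⟨hx0, le_refl x⟩
    have hlim : 2 ≤ g τ := by
      have htend : Filter.Tendsto g (nhdsWithin τ (Iio τ)) (nhds (g τ)) :=
        (hg.continuousAt).continuousWithinAt.tendsto
      refine ge_of_tendsto htend ?_
      have hmem : Ioo 0 τ ∈ nhdsWithin τ (Iio τ) :=
        Ioo_mem_nhdsLT_of_mem ⟨hτ0, le_refl τ⟩
      exact Filter.eventually_of_mem hmem (fun x hx => hf2 x hx.1.le hx.2)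
    linarith [hτW.2]
  exact claimA b hb hgood b ⟨hb, le_refl b⟩

lemma delta_bound (d p q : ℝ) :
    ((Real.cos (2 * d) - 1) * p - Real.sin (2 * d) * q) ^ 2
      + (Real.sin (2 * d) * p + (Real.cos (2 * d) - 1) * q) ^ 2
      = 4 * Real.sin d ^ 2 * (p ^ 2 + q ^ 2) := by
  have h1 : Real.cos (2 * d) = 1 - 2 * Real.sin d ^ 2 := by
    linear_combination (Real.cos_two_mul d) + 2 * (Real.sin_sq_add_cos_sq d)
  rw [h1, Real.sin_two_mul]
  linear_combination (4 * Real.sin d ^ 2 * (p ^ 2 + q ^ 2)) * (Real.sin_sq_add_cos_sq d)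

lemma fnorm_def (X : M2) : fnorm X = Real.sqrt (mip X X) := rfl

lemma mip_expand (X Y : M2) : mip X Y =
    X 0 0 * Y 0 0 + X 0 1 * Y 0 1 + X 1 0 * Y 1 0 + X 1 1 * Y 1 1 := by
  simp [mip, Matrix.trace_fin_two, Matrix.mul_apply, Fin.sum_univ_two, Matrix.transpose_apply]
  ring

lemma det_expand (X : M2) : X.det = X 0 0 * X 1 1 - X 0 1 * X 1 0 := Matrix.det_fin_two X

lemma mip_self_nonneg (X : M2) : 0 ≤ mip X X := by
  rw [mip_expand]
  have h1 := mul_self_nonneg (X 0 0)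
  have h2 := mul_self_nonneg (X 0 1)
  have h3 := mul_self_nonneg (X 1 0)
  have h4 := mul_self_nonneg (X 1 1)
  linarith

set_option maxHeartbeats 8000000 in
/-- recurrence of solutions with |A(t)| nonconstant and T-periodic. -/
theorem recurrence (κ : ℝ) (hκ : 0 ≤ κ) (A₀ B₀ : M2)
    (hdet : A₀.det = 1) (htan : mip B₀ (cofm A₀) = 0)
    (A : ℝ → M2) (hA : ContDiff ℝ 2 A)
    (hA0 : A 0 = A₀) (hB0 : deriv A 0 = B₀)
    (hode : ∀ t : ℝ, deriv (deriv A) t + κ • A t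
      = Lam κ (A t) (deriv A t) • cofm (A t))
    (T : ℝ) (hT : 0 < T)
    (hper : Function.Periodic (fun t => fnorm (A t)) T)
    (hnonconst : ∃ s t : ℝ, fnorm (A s) ≠ fnorm (A t)) :
    ∀ N : ℕ, 0 < N → ∃ ℓ : ℕ, 1 ≤ ℓ ∧ ℓ ≤ N ^ 2 ∧
      ∀ t : ℝ, fnorm (A (2 * ℓ * T + t) - A t) ≤ 8 * Real.pi * fnorm (A t) / N := by
  have hπ := Real.pi_pos
  -- Differentiability and entrywise derivatives
  have hA1 : Differentiable ℝ A := hA.differentiable (by norm_num)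
  have h2 : ContDiff ℝ ((1 : WithTop ℕ∞) + 1) A := hA.of_le (by norm_num)
  have hA2 : Differentiable ℝ (deriv A) :=
    ((contDiff_succ_iff_deriv.mp h2).2.2).differentiable (by norm_num)
  have hDA : ∀ (i j : Fin 2) (t : ℝ), HasDerivAt (fun s => A s i j) (deriv A t i j) t := by
    intro i j t
    exact (hasDerivAt_pi.1 ((hasDerivAt_pi.1 (hA1 t).hasDerivAt) i)) j
  have hDA' : ∀ (i j : Fin 2) (t : ℝ),
      HasDerivAt (fun s => deriv A s i j) (deriv (deriv A) t i j) t := by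
    intro i j t
    exact (hasDerivAt_pi.1 ((hasDerivAt_pi.1 (hA2 t).hasDerivAt) i)) j
  set Λ : ℝ → ℝ := fun t => Lam κ (A t) (deriv A t) with hΛdef
  have hodeE : ∀ (t : ℝ) (i j : Fin 2), deriv (deriv A) t i j
      = Λ t * cofm (A t) i j - κ * A t i j := by
    intro t i j
    have h := congrFun (congrFun (hode t) i) j
    simp only [Matrix.add_apply, Matrix.smul_apply, smul_eq_mul] at h
    linarith
  have ho00 : ∀ t, deriv (deriv A) t 0 0 = Λ t * A t 1 1 - κ * A t 0 0 := by
    intro t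
    have h := hodeE t 0 0
    rw [show cofm (A t) 0 0 = A t 1 1 by simp [cofm]] at h
    exact h
  have ho01 : ∀ t, deriv (deriv A) t 0 1 = Λ t * (-(A t 1 0)) - κ * A t 0 1 := by
    intro t
    have h := hodeE t 0 1
    rw [show cofm (A t) 0 1 = -(A t 1 0) by simp [cofm]] at h
    exact h
  have ho10 : ∀ t, deriv (deriv A) t 1 0 = Λ t * (-(A t 0 1)) - κ * A t 1 0 := by
    intro t
    have h := hodeE t 1 0
    rw [show cofm (A t) 1 0 = -(A t 0 1) by simp [cofm]] at h
    exact h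
  have ho11 : ∀ t, deriv (deriv A) t 1 1 = Λ t * A t 0 0 - κ * A t 1 1 := by
    intro t
    have h := hodeE t 1 1
    rw [show cofm (A t) 1 1 = A t 0 0 by simp [cofm]] at h
    exact h
  -- the squared norm g
  obtain ⟨g, hgdef⟩ : ∃ g : ℝ → ℝ, g = fun t => mip (A t) (A t) := ⟨_, rfl⟩
  have ghq : ∀ t, g t = A t 0 0 ^ 2 + A t 0 1 ^ 2 + A t 1 0 ^ 2 + A t 1 1 ^ 2 := by
    intro t
    rw [hgdef]
    show mip (A t) (A t) = _
    rw [mip_expand]; ring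
  have hcontE : ∀ (i j : Fin 2), Continuous fun t => A t i j := by
    intro i j
    exact Differentiable.continuous (fun t => (hDA i j t).differentiableAt)
  have hgcont : Continuous g := by
    have e : g = fun t => A t 0 0 ^ 2 + A t 0 1 ^ 2 + A t 1 0 ^ 2 + A t 1 1 ^ 2 := funext ghq
    rw [e]
    exact ((((hcontE 0 0).pow 2).add ((hcontE 0 1).pow 2)).add
      ((hcontE 1 0).pow 2)).add ((hcontE 1 1).pow 2)
  have gper : ∀ t, g (t + T) = g t := by
    intro t
    have h1 := hper t
    simp only at h1
    have e : ∀ s : ℝ, mip (A s) (A s) = fnorm (A s) ^ 2 := by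
      intro s
      rw [fnorm_def, Real.sq_sqrt (mip_self_nonneg _)]
    rw [hgdef]
    show mip (A (t + T)) (A (t + T)) = mip (A t) (A t)
    rw [e, e, h1]
  have hgD : ∀ t, HasDerivAt g (2 * (A t 0 0 * deriv A t 0 0 + A t 0 1 * deriv A t 0 1
      + A t 1 0 * deriv A t 1 0 + A t 1 1 * deriv A t 1 1)) t := by
    intro t
    have e : g = fun t => A t 0 0 * A t 0 0 + A t 0 1 * A t 0 1 + A t 1 0 * A t 1 0
        + A t 1 1 * A t 1 1 := by
      funext u; rw [ghq u]; ring
    rw [e]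
    have h := ((((hDA 0 0 t).mul (hDA 0 0 t)).add ((hDA 0 1 t).mul (hDA 0 1 t))).add
      ((hDA 1 0 t).mul (hDA 1 0 t))).add ((hDA 1 1 t).mul (hDA 1 1 t))
    refine h.congr_deriv ?_; ring
  -- the determinant f ≡ 1
  have hΛg : ∀ t, g t ≠ 0 → Λ t * g t = 2 * κ
      - 2 * (deriv A t 0 0 * deriv A t 1 1 - deriv A t 0 1 * deriv A t 1 0) := by
    intro t hgt
    have h1 : Λ t * g t = 2 * (κ - (deriv A t).det) := by
      rw [hΛdef, hgdef]
      show Lam κ (A t) (deriv A t) * mip (A t) (A t) = _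
      unfold Lam
      rw [div_mul_cancel₀]
      exact fun h => hgt (by rw [hgdef]; exact h)
    rw [h1, det_expand]; ring
  have hfD : ∀ t, HasDerivAt (fun s => (A s).det)
      (deriv A t 0 0 * A t 1 1 + A t 0 0 * deriv A t 1 1
        - deriv A t 0 1 * A t 1 0 - A t 0 1 * deriv A t 1 0) t := by
    intro t
    have e : (fun s => (A s).det) = fun s => A s 0 0 * A s 1 1 - A s 0 1 * A s 1 0 := by
      funext u; rw [det_expand]
    rw [e]
    have h := (((hDA 0 0 t).mul (hDA 1 1 t)).sub ((hDA 0 1 t).mul (hDA 1 0 t)))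
    refine h.congr_deriv ?_; ring
  have hf1D : ∀ t, g t ≠ 0 → HasDerivAt (fun s => deriv A s 0 0 * A s 1 1
      + A s 0 0 * deriv A s 1 1 - deriv A s 0 1 * A s 1 0 - A s 0 1 * deriv A s 1 0)
      (-(2 * κ) * ((A t).det - 1)) t := by
    intro t hgt
    have h := ((((hDA' 0 0 t).mul (hDA 1 1 t)).add ((hDA 0 0 t).mul (hDA' 1 1 t))).sub
      ((hDA' 0 1 t).mul (hDA 1 0 t))).sub ((hDA 0 1 t).mul (hDA' 1 0 t))
    refine h.congr_deriv ?_
    rw [ho00 t, ho01 t, ho10 t, ho11 t, det_expand]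
    have h2 := hΛg t hgt
    rw [ghq t] at h2
    linear_combination h2
  have hgf2 : ∀ t, (A t).det = 1 → 2 ≤ g t := by
    intro t hft
    rw [ghq t]
    rw [det_expand] at hft
    linarith [sq_nonneg (A t 0 0 - A t 1 1), sq_nonneg (A t 0 1 + A t 1 0)]
  have hf0' : (A 0).det = 1 := by rw [hA0]; exact hdet
  have hf10' : deriv A 0 0 0 * A 0 1 1 + A 0 0 0 * deriv A 0 1 1
      - deriv A 0 0 1 * A 0 1 0 - A 0 0 1 * deriv A 0 1 0 = 0 := by
    have h := htan
    rw [← hA0, ← hB0, mip_expand] at h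
    rw [show cofm (A 0) 0 0 = A 0 1 1 by simp [cofm],
        show cofm (A 0) 0 1 = -(A 0 1 0) by simp [cofm],
        show cofm (A 0) 1 0 = -(A 0 0 1) by simp [cofm],
        show cofm (A 0) 1 1 = A 0 0 0 by simp [cofm]] at h
    linarith
  have hfone : ∀ t, (A t).det = 1 := by
    have hfwd := det_one_fwd (κ := κ) hfD hf1D hgcont hgf2 hf0' hf10'
    intro t
    rcases le_total 0 t with h | h
    · exact hfwd t h
    · have hrD : ∀ s, HasDerivAt (fun u => (A (-u)).det)
          (-(deriv A (-s) 0 0 * A (-s) 1 1 + A (-s) 0 0 * deriv A (-s) 1 1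
            - deriv A (-s) 0 1 * A (-s) 1 0 - A (-s) 0 1 * deriv A (-s) 1 0)) s := by
        intro s
        have h1 := (hfD (-s)).scomp s (hasDerivAt_neg s)
        simp [mul_comm] at h1; exact h1.congr_deriv (by ring)
      have hr1D : ∀ s, g (-s) ≠ 0 → HasDerivAt (fun u =>
          -(deriv A (-u) 0 0 * A (-u) 1 1 + A (-u) 0 0 * deriv A (-u) 1 1
            - deriv A (-u) 0 1 * A (-u) 1 0 - A (-u) 0 1 * deriv A (-u) 1 0))
          (-(2 * κ) * ((A (-s)).det - 1)) s := by
        intro s hgs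
        have h1 := ((hf1D (-s) hgs).scomp s (hasDerivAt_neg s)).neg
        simp only [Function.comp_def, smul_eq_mul] at h1
        refine h1.congr_deriv ?_
        ring
      have := det_one_fwd (κ := κ) (g := fun s => g (-s))
        (f1 := fun s => -(deriv A (-s) 0 0 * A (-s) 1 1 + A (-s) 0 0 * deriv A (-s) 1 1
          - deriv A (-s) 0 1 * A (-s) 1 0 - A (-s) 0 1 * deriv A (-s) 1 0))
        hrD hr1D
        (hgcont.comp continuous_neg) (fun s hs => hgf2 (-s) hs)
        (by norm_num [hf0']) (by norm_num [hf10']) (-t) (by linarith)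
      simpa using this
  have hg2 : ∀ t, 2 ≤ g t := fun t => hgf2 t (hfone t)
  have hgne : ∀ t, g t ≠ 0 := fun t => ne_of_gt (by linarith [hg2 t])
  have hf1zero : ∀ t, deriv A t 0 0 * A t 1 1 + A t 0 0 * deriv A t 1 1
      - deriv A t 0 1 * A t 1 0 - A t 0 1 * deriv A t 1 0 = 0 := by
    intro t
    have h1 : HasDerivAt (fun s => (A s).det) 0 t := by
      have e : (fun s => (A s).det) = fun _ => (1:ℝ) := funext hfone
      rw [e]; exact hasDerivAt_const t 1
    exact ((hfD t).unique h1)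
  -- conservation law
  have hWd : ∀ t, HasDerivAt (fun u => ((deriv A u 0 0 * deriv A u 1 1
      - deriv A u 0 1 * deriv A u 1 0) - κ) * g u) 0 t := by
    intro t
    have hh : HasDerivAt (fun u => deriv A u 0 0 * deriv A u 1 1
        - deriv A u 0 1 * deriv A u 1 0)
        (deriv (deriv A) t 0 0 * deriv A t 1 1 + deriv A t 0 0 * deriv (deriv A) t 1 1
          - (deriv (deriv A) t 0 1 * deriv A t 1 0 + deriv A t 0 1 * deriv (deriv A) t 1 0)) t :=
      ((hDA' 0 0 t).mul (hDA' 1 1 t)).sub ((hDA' 0 1 t).mul (hDA' 1 0 t))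
    have h := (hh.sub_const κ).mul (hgD t)
    refine h.congr_deriv ?_
    rw [ho00 t, ho01 t, ho10 t, ho11 t]
    have h2 := hΛg t (hgne t)
    rw [ghq t] at h2
    have h3 := hf1zero t
    rw [ghq t]
    linear_combination (A t 0 0 * deriv A t 0 0 + A t 0 1 * deriv A t 0 1
      + A t 1 0 * deriv A t 1 0 + A t 1 1 * deriv A t 1 1) * h2
      - (κ * (A t 0 0 ^ 2 + A t 0 1 ^ 2 + A t 1 0 ^ 2 + A t 1 1 ^ 2)) * h3
  have hWconst : ∀ t, ((deriv A t 0 0 * deriv A t 1 1 - deriv A t 0 1 * deriv A t 1 0) - κ)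
      * g t = ((deriv A 0 0 0 * deriv A 0 1 1 - deriv A 0 0 1 * deriv A 0 1 0) - κ) * g 0 := by
    intro t
    exact is_const_of_deriv_eq_zero (fun s => (hWd s).differentiableAt)
      (fun s => (hWd s).deriv) t 0
  set cC : ℝ := ((deriv A 0 0 0 * deriv A 0 1 1 - deriv A 0 0 1 * deriv A 0 1 0) - κ) * g 0
    with hcCdef
  have hΛform : ∀ t, Λ t = -2 * cC / (g t) ^ 2 := by
    intro t
    have h1 := hΛg t (hgne t)
    have h2 := hWconst t
    rw [eq_div_iff (pow_ne_zero 2 (hgne t))]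
    linear_combination (g t) * h1 - 2 * h2
  have hΛper : ∀ t, Λ (t + T) = Λ t := by
    intro t
    rw [hΛform (t + T), hΛform t, gper t]
  have hΛcont : Continuous Λ := by
    have e : Λ = fun u => -2 * cC / (g u) ^ 2 := funext hΛform
    rw [e]
    exact continuous_const.div (hgcont.pow 2) (fun u => pow_ne_zero 2 (hgne u))
  -- rotation structure for the two planes
  have hρ₁ : ∀ t, (A (t + T) 0 0 + A (t + T) 1 1) ^ 2 + (A (t + T) 1 0 - A (t + T) 0 1) ^ 2
      = (A t 0 0 + A t 1 1) ^ 2 + (A t 1 0 - A t 0 1) ^ 2 := by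
    intro t
    have h1 := gper t
    rw [ghq t, ghq (t + T)] at h1
    have h2 := hfone t
    have h3 := hfone (t + T)
    rw [det_expand] at h2 h3
    linear_combination h1 + 2 * h3 - 2 * h2
  have hρ₂ : ∀ t, (A (t + T) 0 0 - A (t + T) 1 1) ^ 2 + (A (t + T) 0 1 + A (t + T) 1 0) ^ 2
      = (A t 0 0 - A t 1 1) ^ 2 + (A t 0 1 + A t 1 0) ^ 2 := by
    intro t
    have h1 := gper t
    rw [ghq t, ghq (t + T)] at h1
    have h2 := hfone t
    have h3 := hfone (t + T)
    rw [det_expand] at h2 h3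
    linear_combination h1 - 2 * h3 + 2 * h2
  obtain ⟨c₁, s₁, hcs₁, hrot₁⟩ := rot_lemma
    (x := fun s => A s 0 0 + A s 1 1) (y := fun s => A s 1 0 - A s 0 1)
    (x' := fun s => deriv A s 0 0 + deriv A s 1 1)
    (y' := fun s => deriv A s 1 0 - deriv A s 0 1)
    (μ := fun t => Λ t - κ) (T := T)
    (fun t => (hDA 0 0 t).add (hDA 1 1 t))
    (fun t => (hDA 1 0 t).sub (hDA 0 1 t))
    (fun t => by
      have h := (hDA' 0 0 t).add (hDA' 1 1 t)
      refine h.congr_deriv ?_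
      rw [ho00 t, ho11 t]; ring)
    (fun t => by
      have h := (hDA' 1 0 t).sub (hDA' 0 1 t)
      refine h.congr_deriv ?_
      rw [ho10 t, ho01 t]; ring)
    (hΛcont.sub continuous_const)
    (fun t => by show Λ (t + T) - κ = Λ t - κ; rw [hΛper t])
    hρ₁
  obtain ⟨c₂, s₂, hcs₂, hrot₂⟩ := rot_lemma
    (x := fun s => A s 0 0 - A s 1 1) (y := fun s => A s 0 1 + A s 1 0)
    (x' := fun s => deriv A s 0 0 - deriv A s 1 1)
    (y' := fun s => deriv A s 0 1 + deriv A s 1 0)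
    (μ := fun t => -Λ t - κ) (T := T)
    (fun t => (hDA 0 0 t).sub (hDA 1 1 t))
    (fun t => (hDA 0 1 t).add (hDA 1 0 t))
    (fun t => by
      have h := (hDA' 0 0 t).sub (hDA' 1 1 t)
      refine h.congr_deriv ?_
      rw [ho00 t, ho11 t]; ring)
    (fun t => by
      have h := (hDA' 0 1 t).add (hDA' 1 0 t)
      refine h.congr_deriv ?_
      rw [ho01 t, ho10 t]; ring)
    ((hΛcont.neg).sub continuous_const)
    (fun t => by show -Λ (t + T) - κ = -Λ t - κ; rw [hΛper t])
    hρ₂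
  obtain ⟨φ₁, hφc₁, hφs₁⟩ := exists_cos_sin c₁ s₁ hcs₁
  obtain ⟨φ₂, hφc₂, hφs₂⟩ := exists_cos_sin c₂ s₂ hcs₂
  have hiter₁ := rot_iter (x := fun s => A s 0 0 + A s 1 1) (y := fun s => A s 1 0 - A s 0 1)
    (T := T) (φ := φ₁) (fun t => by rw [hφc₁, hφs₁]; exact hrot₁ t)
  have hiter₂ := rot_iter (x := fun s => A s 0 0 - A s 1 1) (y := fun s => A s 0 1 + A s 1 0)
    (T := T) (φ := φ₂) (fun t => by rw [hφc₂, hφs₂]; exact hrot₂ t)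
  -- conclusion
  intro N hN
  have hNR : (0:ℝ) < N := by exact_mod_cast hN
  obtain ⟨ℓ, hℓ1, hℓ2, m₁, m₂, hm₁, hm₂⟩ :=
    dirichlet2 (φ₁ / (2 * Real.pi)) (φ₂ / (2 * Real.pi)) N hN
  refine ⟨ℓ, hℓ1, hℓ2, ?_⟩
  intro t
  have hδ : ∀ (φ : ℝ) (m : ℤ), |(ℓ:ℝ) * (φ / (2 * Real.pi)) - m| ≤ 1 / N →
      |(ℓ:ℝ) * φ - 2 * Real.pi * m| ≤ 2 * Real.pi / N := by
    intro φ m hm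
    have h2 : (ℓ:ℝ) * φ - 2 * Real.pi * m
        = (2 * Real.pi) * ((ℓ:ℝ) * (φ / (2 * Real.pi)) - m) := by
      field_simp
    rw [h2, abs_mul, abs_of_pos (by positivity : (0:ℝ) < 2 * Real.pi)]
    calc 2 * Real.pi * |(ℓ:ℝ) * (φ / (2 * Real.pi)) - m|
        ≤ 2 * Real.pi * (1 / N) := by
          exact mul_le_mul_of_nonneg_left hm (by positivity)
      _ = 2 * Real.pi / N := by ring
  have hδ₁ := hδ φ₁ m₁ hm₁
  have hδ₂ := hδ φ₂ m₂ hm₂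
  have hsinb : ∀ (φ : ℝ) (m : ℤ), |(ℓ:ℝ) * φ - 2 * Real.pi * m| ≤ 2 * Real.pi / N →
      Real.sin ((ℓ:ℝ) * φ - 2 * Real.pi * m) ^ 2 ≤ (2 * Real.pi / N) ^ 2 := by
    intro φ m hb
    have h1 := (abs_sin_le_abs ((ℓ:ℝ) * φ - 2 * Real.pi * m)).trans hb
    calc Real.sin ((ℓ:ℝ) * φ - 2 * Real.pi * m) ^ 2
        = |Real.sin ((ℓ:ℝ) * φ - 2 * Real.pi * m)| ^ 2 := (sq_abs _).symm
      _ ≤ (2 * Real.pi / N) ^ 2 := pow_le_pow_left₀ (abs_nonneg _) h1 2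
  have hsin₁ := hsinb φ₁ m₁ hδ₁
  have hsin₂ := hsinb φ₂ m₂ hδ₂
  have harg : 2 * (ℓ:ℝ) * T + t = t + ((2 * ℓ : ℕ) : ℝ) * T := by push_cast; ring
  rw [harg]
  have hcossin : ∀ (φ : ℝ) (m : ℤ),
      Real.cos (((2 * ℓ : ℕ) : ℝ) * φ) = Real.cos (2 * ((ℓ:ℝ) * φ - 2 * Real.pi * m))
      ∧ Real.sin (((2 * ℓ : ℕ) : ℝ) * φ) = Real.sin (2 * ((ℓ:ℝ) * φ - 2 * Real.pi * m)) := by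
    intro φ m
    have e : ((2 * ℓ : ℕ) : ℝ) * φ
        = 2 * ((ℓ:ℝ) * φ - 2 * Real.pi * m) + (2 * m : ℤ) * (2 * Real.pi) := by
      push_cast; ring
    rw [e, Real.cos_add_int_mul_two_pi, Real.sin_add_int_mul_two_pi]
    exact ⟨rfl, rfl⟩
  have hit₁ := hiter₁ (2 * ℓ) t
  have hit₂ := hiter₂ (2 * ℓ) t
  rw [(hcossin φ₁ m₁).1, (hcossin φ₁ m₁).2] at hit₁
  rw [(hcossin φ₂ m₂).1, (hcossin φ₂ m₂).2] at hit₂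
  set u : ℝ := t + ((2 * ℓ : ℕ) : ℝ) * T with hu
  -- squared-norm estimate
  have e1 : mip (A u - A t) (A u - A t)
      = (((A u 0 0 + A u 1 1) - (A t 0 0 + A t 1 1)) ^ 2
        + ((A u 1 0 - A u 0 1) - (A t 1 0 - A t 0 1)) ^ 2
        + (((A u 0 0 - A u 1 1) - (A t 0 0 - A t 1 1)) ^ 2
        + ((A u 0 1 + A u 1 0) - (A t 0 1 + A t 1 0)) ^ 2)) / 2 := by
    rw [mip_expand]
    simp only [Matrix.sub_apply]
    ring
  have hb1 : ((A u 0 0 + A u 1 1) - (A t 0 0 + A t 1 1)) ^ 2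
      + ((A u 1 0 - A u 0 1) - (A t 1 0 - A t 0 1)) ^ 2
      = 4 * Real.sin ((ℓ:ℝ) * φ₁ - 2 * Real.pi * m₁) ^ 2
        * ((A t 0 0 + A t 1 1) ^ 2 + (A t 1 0 - A t 0 1) ^ 2) := by
    rw [hit₁.1, hit₁.2]
    have := delta_bound ((ℓ:ℝ) * φ₁ - 2 * Real.pi * m₁) (A t 0 0 + A t 1 1)
      (A t 1 0 - A t 0 1)
    linear_combination this
  have hb2 : ((A u 0 0 - A u 1 1) - (A t 0 0 - A t 1 1)) ^ 2
      + ((A u 0 1 + A u 1 0) - (A t 0 1 + A t 1 0)) ^ 2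
      = 4 * Real.sin ((ℓ:ℝ) * φ₂ - 2 * Real.pi * m₂) ^ 2
        * ((A t 0 0 - A t 1 1) ^ 2 + (A t 0 1 + A t 1 0) ^ 2) := by
    rw [hit₂.1, hit₂.2]
    have := delta_bound ((ℓ:ℝ) * φ₂ - 2 * Real.pi * m₂) (A t 0 0 - A t 1 1)
      (A t 0 1 + A t 1 0)
    linear_combination this
  have hsum : ((A t 0 0 + A t 1 1) ^ 2 + (A t 1 0 - A t 0 1) ^ 2)
      + ((A t 0 0 - A t 1 1) ^ 2 + (A t 0 1 + A t 1 0) ^ 2) = 2 * g t := by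
    rw [ghq t]; ring
  have hmain : mip (A u - A t) (A u - A t) ≤ (4 * Real.pi / N) ^ 2 * g t := by
    rw [e1]
    have t1 : Real.sin ((ℓ:ℝ) * φ₁ - 2 * Real.pi * m₁) ^ 2
        * ((A t 0 0 + A t 1 1) ^ 2 + (A t 1 0 - A t 0 1) ^ 2)
        ≤ (2 * Real.pi / N) ^ 2 * ((A t 0 0 + A t 1 1) ^ 2 + (A t 1 0 - A t 0 1) ^ 2) :=
      mul_le_mul_of_nonneg_right hsin₁ (by positivity)
    have t2 : Real.sin ((ℓ:ℝ) * φ₂ - 2 * Real.pi * m₂) ^ 2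
        * ((A t 0 0 - A t 1 1) ^ 2 + (A t 0 1 + A t 1 0) ^ 2)
        ≤ (2 * Real.pi / N) ^ 2 * ((A t 0 0 - A t 1 1) ^ 2 + (A t 0 1 + A t 1 0) ^ 2) :=
      mul_le_mul_of_nonneg_right hsin₂ (by positivity)
    have hb4 : (4 * Real.pi / (N:ℝ)) ^ 2 * g t = 4 * ((2 * Real.pi / (N:ℝ)) ^ 2) * g t := by
      ring
    rw [hb1, hb2, hb4]
    have e5 : (4 * Real.sin ((ℓ:ℝ) * φ₁ - 2 * Real.pi * m₁) ^ 2
        * ((A t 0 0 + A t 1 1) ^ 2 + (A t 1 0 - A t 0 1) ^ 2)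
        + 4 * Real.sin ((ℓ:ℝ) * φ₂ - 2 * Real.pi * m₂) ^ 2
        * ((A t 0 0 - A t 1 1) ^ 2 + (A t 0 1 + A t 1 0) ^ 2)) / 2
        = 2 * (Real.sin ((ℓ:ℝ) * φ₁ - 2 * Real.pi * m₁) ^ 2
          * ((A t 0 0 + A t 1 1) ^ 2 + (A t 1 0 - A t 0 1) ^ 2))
        + 2 * (Real.sin ((ℓ:ℝ) * φ₂ - 2 * Real.pi * m₂) ^ 2
          * ((A t 0 0 - A t 1 1) ^ 2 + (A t 0 1 + A t 1 0) ^ 2)) := by ring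
    rw [e5]
    have t4 := mul_le_mul_of_nonneg_left t1 (by norm_num : (0:ℝ) ≤ 2)
    have t5 := mul_le_mul_of_nonneg_left t2 (by norm_num : (0:ℝ) ≤ 2)
    have t6 : 2 * ((2 * Real.pi / (N:ℝ)) ^ 2
        * ((A t 0 0 + A t 1 1) ^ 2 + (A t 1 0 - A t 0 1) ^ 2))
        + 2 * ((2 * Real.pi / (N:ℝ)) ^ 2
        * ((A t 0 0 - A t 1 1) ^ 2 + (A t 0 1 + A t 1 0) ^ 2))
        = 4 * (2 * Real.pi / (N:ℝ)) ^ 2 * g t := by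
      linear_combination (2 * (2 * Real.pi / (N:ℝ)) ^ 2) * hsum
    linarith [t4, t5, t6]
  have hfno : fnorm (A t) = Real.sqrt (g t) := by rw [fnorm_def, hgdef]
  have hfn2 : fnorm (A u - A t) = Real.sqrt (mip (A u - A t) (A u - A t)) := fnorm_def _
  have hstep : fnorm (A u - A t) ≤ 4 * Real.pi / N * fnorm (A t) := by
    rw [hfn2, hfno]
    calc Real.sqrt (mip (A u - A t) (A u - A t))
        ≤ Real.sqrt ((4 * Real.pi / N) ^ 2 * g t) := Real.sqrt_le_sqrt hmain
      _ = 4 * Real.pi / N * Real.sqrt (g t) := by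
          rw [Real.sqrt_mul (sq_nonneg _), Real.sqrt_sq (by positivity)]
  have hfnn : 0 ≤ fnorm (A t) := Real.sqrt_nonneg _
  calc fnorm (A u - A t) ≤ 4 * Real.pi / N * fnorm (A t) := hstep
    _ ≤ 8 * Real.pi / N * fnorm (A t) := by
        refine mul_le_mul_of_nonneg_right ?_ hfnn
        gcongr
        linarith
    _ = 8 * Real.pi * fnorm (A t) / N := by ring
end
end
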